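/- Average of the vertical advection term: let h > 0 and let v : ℝ² × ℝ → ℝ² be continuously differentiable such that v̄ = 𝒜₂v satisfies ∂_x v̄₁ + ∂_y v̄₂ ≡ 0, and write ṽ = v − v̄. Then for every (x,y): (1/h)∫_{−h}^0 w(v) ∂_z v (x,y,z) dz = (1/h)∫_{−h}^0 (∇_H·ṽ) ṽ (x,y,z) dz. -/

import Mathlib

open MeasureTheory intervalIntegral

/-- The barotropic (vertical) average `v̄ = 𝒜₂v` of a horizontal velocity field. -/
noncomputable def baroAvg2 (h : ℝ) (v : ℝ → ℝ → ℝ → ℝ × ℝ) (x y : ℝ) : ℝ × ℝ :=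
  h⁻¹ • ∫ z in (-h)..(0:ℝ), v x y z

open Set Metric in
/-- Differentiation under the interval integral sign, for continuous data. -/
lemma hasDerivAt_param_intervalIntegral (a b : ℝ) (f f' : ℝ → ℝ → ℝ × ℝ)
    (hf : Continuous fun p : ℝ × ℝ => f p.1 p.2)
    (hf' : Continuous fun p : ℝ × ℝ => f' p.1 p.2)
    (hd : ∀ s z : ℝ, HasDerivAt (fun s' => f s' z) (f' s z) s) (x₀ : ℝ) :
    HasDerivAt (fun s => ∫ z in a..b, f s z) (∫ z in a..b, f' x₀ z) x₀ := by
  have hK : IsCompact (closedBall x₀ 1 ×ˢ uIcc a b) :=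
    (isCompact_closedBall _ _).prod isCompact_uIcc
  obtain ⟨C, hC⟩ := hK.exists_bound_of_continuousOn hf'.continuousOn
  have hcont : ∀ s : ℝ, Continuous fun z => f s z := fun s =>
    hf.comp (continuous_const.prodMk continuous_id)
  have hcont' : ∀ s : ℝ, Continuous fun z => f' s z := fun s =>
    hf'.comp (continuous_const.prodMk continuous_id)
  exact (intervalIntegral.hasDerivAt_integral_of_dominated_loc_of_deriv_le
    (F := f) (F' := f') (bound := fun _ => C) (Metric.ball_mem_nhds x₀ one_pos)
    (Filter.Eventually.of_forall fun s => (hcont s).aestronglyMeasurable)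
    ((hcont x₀).intervalIntegrable a b)
    ((hcont' x₀).aestronglyMeasurable)
    (Filter.Eventually.of_forall fun t ht s hs =>
      hC (s, t) ⟨ball_subset_closedBall hs, Set.Ioc_subset_Icc_self ht⟩)
    intervalIntegrable_const
    (Filter.Eventually.of_forall fun t _ s _ => hd s t)).2

/-- **Average of the vertical advection term.**
Let `v : ℝ² × ℝ → ℝ²` be continuously differentiable (partial derivatives
`vx, vy, vz` supplied as data, jointly continuous), with `v̄ = 𝒜₂v` differentiable
with horizontal partials `vbx, vby` and `∂_x v̄₁ + ∂_y v̄₂ ≡ 0`; write `ṽ = v − v̄`,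
`w(v)(x,y,z) = ∫_z^0 (∇_H·v)(x,y,z') dz'`. Then for every `(x,y)`:
`(1/h)∫_{−h}^0 w(v) ∂_z v dz = (1/h)∫_{−h}^0 (∇_H·ṽ) ṽ dz`. -/
theorem avg_vertical_advection
    (h : ℝ) (hh : 0 < h)
    (v vx vy vz : ℝ → ℝ → ℝ → ℝ × ℝ)
    (vbx vby : ℝ → ℝ → ℝ × ℝ)
    (hvx : ∀ x y z : ℝ, HasDerivAt (fun x' => v x' y z) (vx x y z) x)
    (hvy : ∀ x y z : ℝ, HasDerivAt (fun y' => v x y' z) (vy x y z) y)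
    (hvz : ∀ x y z : ℝ, HasDerivAt (fun z' => v x y z') (vz x y z) z)
    (hcv : Continuous fun p : ℝ × ℝ × ℝ => v p.1 p.2.1 p.2.2)
    (hcvx : Continuous fun p : ℝ × ℝ × ℝ => vx p.1 p.2.1 p.2.2)
    (hcvy : Continuous fun p : ℝ × ℝ × ℝ => vy p.1 p.2.1 p.2.2)
    (hcvz : Continuous fun p : ℝ × ℝ × ℝ => vz p.1 p.2.1 p.2.2)
    (hbx : ∀ x y : ℝ, HasDerivAt (fun x' => baroAvg2 h v x' y) (vbx x y) x)
    (hby : ∀ x y : ℝ, HasDerivAt (fun y' => baroAvg2 h v x y') (vby x y) y)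
    (hdiv : ∀ x y : ℝ, (vbx x y).1 + (vby x y).2 = 0) :
    ∀ x y : ℝ,
      h⁻¹ • (∫ z in (-h)..(0:ℝ),
          (∫ z' in z..(0:ℝ), ((vx x y z').1 + (vy x y z').2)) • vz x y z)
        = h⁻¹ • (∫ z in (-h)..(0:ℝ),
            ((vx x y z - vbx x y).1 + (vy x y z - vby x y).2)
              • (v x y z - baroAvg2 h v x y)) := by
  intro x y
  -- continuity in z of the various fields at fixed (x, y)
  have hmapc : ∀ x y : ℝ, Continuous fun z : ℝ => ((x, (y, z)) : ℝ × ℝ × ℝ) := fun x y =>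
    continuous_const.prodMk (continuous_const.prodMk continuous_id)
  have hcvZ : Continuous fun z => v x y z := hcv.comp (hmapc x y)
  have hcvxZ : Continuous fun z => vx x y z := hcvx.comp (hmapc x y)
  have hcvyZ : Continuous fun z => vy x y z := hcvy.comp (hmapc x y)
  have hcvzZ : Continuous fun z => vz x y z := hcvz.comp (hmapc x y)
  -- identify vbx and vby via uniqueness of derivatives
  have hvbx : vbx x y = h⁻¹ • ∫ z in (-h)..(0:ℝ), vx x y z := by
    refine HasDerivAt.unique (hbx x y) ?_
    have := (hasDerivAt_param_intervalIntegral (-h) 0 (fun s z => v s y z)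
      (fun s z => vx s y z)
      (hcv.comp ((continuous_fst).prodMk (continuous_const.prodMk continuous_snd)))
      (hcvx.comp ((continuous_fst).prodMk (continuous_const.prodMk continuous_snd)))
      (fun s z => hvx s y z) x).const_smul (h⁻¹)
    simpa [baroAvg2, Pi.smul_def] using this
  have hvby : vby x y = h⁻¹ • ∫ z in (-h)..(0:ℝ), vy x y z := by
    refine HasDerivAt.unique (hby x y) ?_
    have := (hasDerivAt_param_intervalIntegral (-h) 0 (fun s z => v x s z)
      (fun s z => vy x s z)
      (hcv.comp (continuous_const.prodMk ((continuous_fst).prodMk continuous_snd)))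
      (hcvy.comp (continuous_const.prodMk ((continuous_fst).prodMk continuous_snd)))
      (fun s z => hvy x s z) y).const_smul (h⁻¹)
    simpa [baroAvg2, Pi.smul_def] using this
  -- the divergence
  set D : ℝ → ℝ := fun z => (vx x y z).1 + (vy x y z).2 with hD
  have hDc : Continuous D := (continuous_fst.comp hcvxZ).add (continuous_snd.comp hcvyZ)
  -- ∫ D = 0
  have hfst : (∫ z in (-h)..(0:ℝ), vx x y z).1 = ∫ z in (-h)..(0:ℝ), (vx x y z).1 := by
    have := (ContinuousLinearMap.fst ℝ ℝ ℝ).intervalIntegral_comp_comm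
      (μ := volume) (hcvxZ.intervalIntegrable (-h) 0)
    simpa using this.symm
  have hsnd : (∫ z in (-h)..(0:ℝ), vy x y z).2 = ∫ z in (-h)..(0:ℝ), (vy x y z).2 := by
    have := (ContinuousLinearMap.snd ℝ ℝ ℝ).intervalIntegral_comp_comm
      (μ := volume) (hcvyZ.intervalIntegrable (-h) 0)
    simpa using this.symm
  have hintD : (∫ z in (-h)..(0:ℝ), D z) = 0 := by
    have h0 : (vbx x y).1 + (vby x y).2 = 0 := hdiv x y
    rw [hvbx, hvby] at h0
    simp only [Prod.smul_fst, Prod.smul_snd, smul_eq_mul] at h0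
    rw [hfst, hsnd, ← mul_add] at h0
    have : (∫ z in (-h)..(0:ℝ), (vx x y z).1) + ∫ z in (-h)..(0:ℝ), (vy x y z).2 = 0 := by
      have hne : h⁻¹ ≠ 0 := inv_ne_zero hh.ne'
      exact (mul_eq_zero.mp h0).resolve_left hne
    have hDadd : (∫ z in (-h)..(0:ℝ), D z)
        = (∫ z in (-h)..(0:ℝ), (vx x y z).1) + ∫ z in (-h)..(0:ℝ), (vy x y z).2 :=
      intervalIntegral.integral_add
        ((continuous_fst.comp hcvxZ).intervalIntegrable _ _)
        ((continuous_snd.comp hcvyZ).intervalIntegrable _ _)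
    rw [hDadd]; exact this
  -- the primitive W
  set W : ℝ → ℝ := fun z => ∫ z' in z..(0:ℝ), D z' with hW
  have hWd : ∀ z : ℝ, HasDerivAt W (-(D z)) z := by
    intro z
    have h1 : HasDerivAt (fun u => ∫ t in (0:ℝ)..u, D t) (D z) z :=
      (hDc.integral_hasStrictDerivAt 0 z).hasDerivAt
    have h2 : HasDerivAt (fun u => -(∫ t in (0:ℝ)..u, D t)) (-(D z)) z := h1.neg
    have : W = fun u => -(∫ t in (0:ℝ)..u, D t) := by
      funext u; rw [hW]; simp [intervalIntegral.integral_symm 0 u]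
    rw [this]; exact h2
  have hWc : Continuous W := by
    rw [continuous_iff_continuousAt]; exact fun z => (hWd z).continuousAt
  -- integration by parts: ∫ (W • vz + (-D) • v) = 0
  have hparts : (∫ z in (-h)..(0:ℝ), (W z • vz x y z + (-(D z)) • v x y z))
      = W 0 • v x y 0 - W (-h) • v x y (-h) := by
    refine intervalIntegral.integral_eq_sub_of_hasDerivAt
      (f := fun z => W z • v x y z)
      (f' := fun z => W z • vz x y z + (-(D z)) • v x y z) (fun t _ => ?_) ?_
    · exact (hWd t).smul (hvz x y t)
    · exact (((hWc.smul hcvzZ).add ((hDc.neg).smul hcvZ)).intervalIntegrable _ _)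
  have hW0 : W 0 = 0 := intervalIntegral.integral_same
  have hWmh : W (-h) = 0 := hintD
  have hsplit : (∫ z in (-h)..(0:ℝ), (W z • vz x y z + (-(D z)) • v x y z))
      = (∫ z in (-h)..(0:ℝ), W z • vz x y z) + ∫ z in (-h)..(0:ℝ), (-(D z)) • v x y z :=
    intervalIntegral.integral_add ((hWc.smul hcvzZ).intervalIntegrable _ _)
      (((hDc.neg).smul hcvZ).intervalIntegrable _ _)
  have hLHS : (∫ z in (-h)..(0:ℝ), W z • vz x y z)
      = ∫ z in (-h)..(0:ℝ), D z • v x y z := by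
    have hneg : (∫ z in (-h)..(0:ℝ), (-(D z)) • v x y z)
        = -∫ z in (-h)..(0:ℝ), D z • v x y z := by
      rw [← intervalIntegral.integral_neg]; congr 1; funext z; simp [neg_smul]
    have := hparts
    rw [hsplit, hW0, hWmh, hneg] at this
    simp only [zero_smul, sub_zero] at this
    exact add_neg_eq_zero.mp this
  -- right-hand side
  have hRHS : (∫ z in (-h)..(0:ℝ),
      ((vx x y z - vbx x y).1 + (vy x y z - vby x y).2) • (v x y z - baroAvg2 h v x y))
      = ∫ z in (-h)..(0:ℝ), D z • v x y z := by
    have hco : ∀ z : ℝ, (vx x y z - vbx x y).1 + (vy x y z - vby x y).2 = D z := by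
      intro z
      have := hdiv x y
      simp only [Prod.fst_sub, Prod.snd_sub, hD]
      linarith
    calc (∫ z in (-h)..(0:ℝ),
        ((vx x y z - vbx x y).1 + (vy x y z - vby x y).2) • (v x y z - baroAvg2 h v x y))
        = ∫ z in (-h)..(0:ℝ), (D z • v x y z - D z • baroAvg2 h v x y) := by
          congr 1; funext z; rw [hco z, smul_sub]
      _ = (∫ z in (-h)..(0:ℝ), D z • v x y z)
            - ∫ z in (-h)..(0:ℝ), D z • baroAvg2 h v x y :=
          intervalIntegral.integral_sub ((hDc.smul hcvZ).intervalIntegrable _ _)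
            ((hDc.smul continuous_const).intervalIntegrable _ _)
      _ = ∫ z in (-h)..(0:ℝ), D z • v x y z := by
          rw [intervalIntegral.integral_smul_const, hintD, zero_smul, sub_zero]
  rw [hRHS, ← hLHS]
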